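/- Let P ∈ ℝ^{T×K} have full column rank and P† its Moore–Penrose pseudo-inverse. Let v, v̂ ∈ ℝ^K be unit vectors, and set s̃ = Pv, ŝ = Pv̂. Then if s̃/‖s̃‖ and ŝ/‖ŝ‖ are the unit-normalized time-domain signals, (v̂ᵀv)² ≤ g(P†) + ((ŝᵀs̃)/(‖ŝ‖‖s̃‖))², where g(A) = ‖AᵀA − I‖² + 2‖AᵀA − I‖. -/

import Mathlib

set_option maxHeartbeats 1000000


open scoped RealInnerProductSpace Matrix

/-- Operator norm of a square real matrix, induced by the Euclidean norm. -/
noncomputable def matNorm {d : ℕ} (M : Matrix (Fin d) (Fin d) ℝ) : ℝ :=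
  ‖LinearMap.toContinuousLinearMap (Matrix.toEuclideanLin M)‖

/-- `g(A) = ‖AᵀA − I‖² + 2‖AᵀA − I‖`. -/
noncomputable def gMat {n d : ℕ} (A : Matrix (Fin n) (Fin d) ℝ) : ℝ :=
  matNorm (Aᵀ * A - 1) ^ 2 + 2 * matNorm (Aᵀ * A - 1)

/-- The SI-SDR ratio `R(y, ŷ) = ‖αy‖²/‖αy − ŷ‖²` with `α = ⟪ŷ, y⟫/‖y‖²`. -/
noncomputable def sisdrR {d : ℕ} (y yh : EuclideanSpace ℝ (Fin d)) : ℝ :=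
  ‖(⟪yh, y⟫ / ‖y‖ ^ 2) • y‖ ^ 2 / ‖(⟪yh, y⟫ / ‖y‖ ^ 2) • y - yh‖ ^ 2

lemma SLx (ε a s : ℝ) (hε : 0 ≤ ε) (ht : 2*ε+ε^2 ≤ s^2) (ha : 0 ≤ a) (hs : 0 ≤ s)
    (hcs : a^2 + s^2 = 1) :
    (s^2-(2*ε+ε^2))*(a*(1+ε)+s*ε)^2 ≤ (a^2+(2*ε+ε^2))*(s^2*(1-2*ε)) := by
  have h2 : s^2 ≤ 1 := by nlinarith [sq_nonneg a]
  have hP2 : (s^2-(2*ε+ε^2))*((1-s^2)*(1+ε)^2+ε*(1+ε)+s^2*ε^2)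
      ≤ (1-s^2+(2*ε+ε^2))*(s^2*(1-2*ε)) := by
    nlinarith [mul_nonneg hε (sub_nonneg.2 h2), mul_nonneg hε (sub_nonneg.2 ht),
      mul_nonneg (mul_nonneg hε hε) (sub_nonneg.2 h2),
      mul_nonneg (mul_nonneg hε hε) (sub_nonneg.2 ht),
      mul_nonneg (mul_nonneg hε (sub_nonneg.2 h2)) (sub_nonneg.2 ht),
      mul_nonneg (mul_nonneg hε (sub_nonneg.2 h2)) (sub_nonneg.2 h2),
      mul_nonneg (mul_nonneg hε (sub_nonneg.2 ht)) (sub_nonneg.2 ht),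
      mul_nonneg (mul_nonneg hε hε) hε, sq_nonneg (1-s^2), sq_nonneg ε, sq_nonneg (ε*(1-s^2))]
  -- cross-term bound: (a(1+ε)+sε)^2 ≤ a²(1+ε)² + (a²+s²)ε(1+ε) + s²ε²
  have hcross : (s^2-(2*ε+ε^2))*(a*(1+ε)+s*ε)^2
      ≤ (s^2-(2*ε+ε^2))*((1-s^2)*(1+ε)^2+ε*(1+ε)+s^2*ε^2) := by
    have h3 : 0 ≤ s^2-(2*ε+ε^2) := by linarith
    have h4 : (a*(1+ε)+s*ε)^2 ≤ (1-s^2)*(1+ε)^2+ε*(1+ε)+s^2*ε^2 := by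
      nlinarith [sq_nonneg (a-s), mul_nonneg hε (mul_nonneg hε (sq_nonneg (a-s)))]
    exact mul_le_mul_of_nonneg_left h4 h3
  calc (s^2-(2*ε+ε^2))*(a*(1+ε)+s*ε)^2
      ≤ (s^2-(2*ε+ε^2))*((1-s^2)*(1+ε)^2+ε*(1+ε)+s^2*ε^2) := hcross
    _ ≤ (1-s^2+(2*ε+ε^2))*(s^2*(1-2*ε)) := hP2
    _ = (a^2+(2*ε+ε^2))*(s^2*(1-2*ε)) := by rw [show a^2 = 1-s^2 by linarith]

lemma POLY (ε p q r c s : ℝ) (hε : 0 ≤ ε) (hcase : 2*ε+ε^2 ≤ 1)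
    (hp : |p| ≤ ε) (hq : |q| ≤ ε) (hr : |r| ≤ ε) (hcs : c^2+s^2 = 1) (hs : 0 ≤ s) :
    (c*(1+p)+s*q)^2 ≤ (c^2+2*ε+ε^2)*((1+p)*(c^2*(1+p)+2*c*s*q+s^2*(1+r))) := by
  obtain ⟨hp1, hp2⟩ := abs_le.1 hp
  obtain ⟨hq1, hq2⟩ := abs_le.1 hq
  obtain ⟨hr1, hr2⟩ := abs_le.1 hr
  have hε1 : ε ≤ 1/2 := by nlinarith
  have hdet : 1-2*ε ≤ (1+p)*(1+r)-q^2 := by nlinarith [sq_nonneg q, abs_nonneg q, sq_abs q]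
  have hID : (1+p)*(c^2*(1+p)+2*c*s*q+s^2*(1+r))
      = (c*(1+p)+s*q)^2 + s^2*((1+p)*(1+r)-q^2) := by ring
  set A := (c*(1+p)+s*q)^2 with hA0
  set B := s^2*((1+p)*(1+r)-q^2) with hB0
  have hAnn : 0 ≤ A := sq_nonneg _
  have hBnn : 0 ≤ B := by
    have : (0:ℝ) ≤ 1-2*ε := by linarith
    exact mul_nonneg (sq_nonneg s) (by linarith)
  rw [hID]
  have hc2 : c^2 = 1 - s^2 := by linarith
  rcases le_or_gt (s^2) (2*ε+ε^2) with hcs2 | hcs2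
  · -- s² ≤ t : coefficient nonpositive
    have h1 : A ≤ (c^2+2*ε+ε^2)*A := by
      nlinarith [hAnn, hcs2]
    nlinarith [mul_nonneg (by nlinarith [sq_nonneg c] : (0:ℝ) ≤ c^2+2*ε+ε^2) hBnn, h1]
  · -- t < s²
    have hb : (0:ℝ) ≤ |c| * (1+ε)+s*ε :=
      add_nonneg (mul_nonneg (abs_nonneg c) (by linarith)) (mul_nonneg hs hε)
    have habs : |c*(1+p)+s*q| ≤ |c| * (1+ε)+s*ε := by
      calc |c*(1+p)+s*q| ≤ |c*(1+p)| + |s*q| := abs_add_le _ _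
        _ = |c| * (1+p) + s * |q| := by
            rw [abs_mul, abs_mul, abs_of_nonneg (by linarith : (0:ℝ) ≤ 1+p),
              abs_of_nonneg hs]
        _ ≤ |c| * (1+ε)+s*ε := by
            have e1 : |c| * (1+p) ≤ |c| * (1+ε) :=
              mul_le_mul_of_nonneg_left (by linarith) (abs_nonneg c)
            have e2 : s * |q| ≤ s * ε := mul_le_mul_of_nonneg_left hq hs
            linarith
    have hA : A ≤ (|c| * (1+ε)+s*ε)^2 := by
      rw [hA0, ← sq_abs]
      exact pow_le_pow_left₀ (abs_nonneg _) habs 2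
    have hSL := SLx ε |c| s hε (le_of_lt hcs2) (abs_nonneg c) hs (by rw [sq_abs]; exact hcs)
    rw [sq_abs] at hSL
    have hchain : (s^2-(2*ε+ε^2))*A ≤ (c^2+(2*ε+ε^2))*(s^2*(1-2*ε)) := by
      calc (s^2-(2*ε+ε^2))*A ≤ (s^2-(2*ε+ε^2))*(|c| * (1+ε)+s*ε)^2 :=
            mul_le_mul_of_nonneg_left hA (by linarith)
        _ ≤ (c^2+(2*ε+ε^2))*(s^2*(1-2*ε)) := hSL
    have hBd : (c^2+(2*ε+ε^2))*(s^2*(1-2*ε)) ≤ (c^2+(2*ε+ε^2))*B := by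
      have hb2 : s^2*(1-2*ε) ≤ B := by
        rw [hB0]; exact mul_le_mul_of_nonneg_left hdet (sq_nonneg s)
      exact mul_le_mul_of_nonneg_left hb2 (by nlinarith [sq_nonneg c])
    nlinarith [hchain, hBd, hAnn]

lemma keyIneq {T K : ℕ} (L : EuclideanSpace ℝ (Fin T) →ₗ[ℝ] EuclideanSpace ℝ (Fin K))
    (ε : ℝ) (hε : 0 ≤ ε)
    (hL : ∀ u w : EuclideanSpace ℝ (Fin T), |⟪L u, L w⟫ - ⟪u, w⟫| ≤ ε * (‖u‖ * ‖w‖))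
    (x y : EuclideanSpace ℝ (Fin T)) (hx : ‖x‖ = 1) (hy : ‖y‖ = 1) :
    ⟪L x, L y⟫^2 ≤ (⟪x, y⟫^2 + 2*ε + ε^2) * (‖L x‖^2 * ‖L y‖^2) := by
  have hCS : ⟪L x, L y⟫^2 ≤ ‖L x‖^2 * ‖L y‖^2 := by
    have h := abs_real_inner_le_norm (L x) (L y)
    nlinarith [abs_nonneg (⟪L x, L y⟫), sq_abs (⟪L x, L y⟫), norm_nonneg (L x), norm_nonneg (L y)]
  by_cases hbig : 1 ≤ ⟪x, y⟫^2 + 2*ε + ε^2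
  · nlinarith [mul_nonneg (sq_nonneg ‖L x‖) (sq_nonneg ‖L y‖)]
  · push_neg at hbig
    have hcase : 2*ε + ε^2 ≤ 1 := by nlinarith [sq_nonneg (⟪x, y⟫)]
    set c := ⟪x, y⟫ with hc
    set z := y - c • x with hz
    have hxz : ⟪x, z⟫ = 0 := by
      rw [hz, inner_sub_right, real_inner_smul_right, real_inner_self_eq_norm_sq, hx]
      ring
    have hzz : ‖z‖^2 = 1 - c^2 := by
      have hyx : (⟪y, x⟫:ℝ) = c := by rw [real_inner_comm]
      rw [hz, norm_sub_sq_real, real_inner_smul_right, hyx, norm_smul, hy, hx]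
      simp only [Real.norm_eq_abs, sq_abs, one_pow, mul_one]
      ring
    set s := ‖z‖ with hsdef
    have hs : 0 ≤ s := norm_nonneg z
    have hcs : c^2 + s^2 = 1 := by rw [hzz]; ring
    rcases eq_or_lt_of_le hs with hs0 | hs0
    · -- z = 0 : y = c • x, c² = 1
      have hz0 : z = 0 := by rw [← norm_eq_zero]; exact hs0.symm
      have hyx : y = c • x := by rw [hz, sub_eq_zero] at hz0; exact hz0
      have hc1 : c^2 = 1 := by
        have : s = 0 := hs0.symm
        rw [this] at hcs; linarith [hcs]
      have e1 : ⟪L x, L y⟫ = c * ⟪L x, L x⟫ := by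
        rw [hyx, map_smul, real_inner_smul_right]
      have e2 : ‖L y‖^2 = c^2 * ‖L x‖^2 := by
        rw [hyx, map_smul, norm_smul]
        simp [Real.norm_eq_abs, mul_pow, sq_abs]
      rw [e1, e2, hc1, real_inner_self_eq_norm_sq]
      nlinarith [sq_nonneg ‖L x‖, sq_nonneg (‖L x‖^2)]
    · -- z ≠ 0
      have hzne : z ≠ 0 := by
        intro h
        apply hs0.ne'
        rw [hsdef, h, norm_zero]
      set z' : EuclideanSpace ℝ (Fin T) := s⁻¹ • z with hz'def
      have hz'1 : ‖z'‖ = 1 := by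
        rw [hz'def, norm_smul, Real.norm_eq_abs, abs_inv, abs_of_nonneg hs]
        field_simp
        exact hsdef.symm
      have hzz' : z = s • z' := by
        rw [hz'def, smul_smul, mul_inv_cancel₀ (ne_of_gt hs0), one_smul]
      have hxz' : ⟪x, z'⟫ = 0 := by
        rw [hz'def, real_inner_smul_right, hxz, mul_zero]
      have hyeq : y = c • x + s • z' := by
        rw [← hzz', hz]; abel
      set p := ⟪L x, L x⟫ - 1 with hpdef
      set q := ⟪L x, L z'⟫ with hqdef
      set r := ⟪L z', L z'⟫ - 1 with hrdef
      have hxx : ⟪x, x⟫ = 1 := by rw [real_inner_self_eq_norm_sq, hx]; norm_num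
      have hz'z' : ⟪z', z'⟫ = 1 := by rw [real_inner_self_eq_norm_sq, hz'1]; norm_num
      have hp : |p| ≤ ε := by
        have := hL x x; rw [hxx, hx] at this; simpa [hpdef] using this
      have hq : |q| ≤ ε := by
        have := hL x z'; rw [hxz', hx, hz'1] at this; simpa [hqdef] using this
      have hr : |r| ≤ ε := by
        have := hL z' z'; rw [hz'z', hz'1] at this; simpa [hrdef] using this
      have hLy : L y = c • L x + s • L z' := by rw [hyeq]; simp [map_add, map_smul]
      have e1 : ⟪L x, L y⟫ = c*(1+p) + s*q := by
        rw [hLy, inner_add_right, real_inner_smul_right, real_inner_smul_right, hpdef, hqdef]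
        ring
      have e2 : ‖L x‖^2 = 1 + p := by
        rw [hpdef, ← real_inner_self_eq_norm_sq]; ring
      have e3 : ‖L y‖^2 = c^2*(1+p) + 2*c*s*q + s^2*(1+r) := by
        rw [← real_inner_self_eq_norm_sq, hLy, hpdef, hqdef, hrdef]
        simp only [inner_add_left, inner_add_right, real_inner_smul_left,
          real_inner_smul_right]
        rw [real_inner_comm (L z') (L x)]
        ring
      rw [e1, e2, e3]
      exact POLY ε p q r c s hε hcase hp hq hr hcs hs

theorem stmt8 {T K : ℕ} (P : Matrix (Fin T) (Fin K) ℝ)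
    (hfull : IsUnit (Pᵀ * P)) (v vh : EuclideanSpace ℝ (Fin K))
    (hv : ‖v‖ = 1) (hvh : ‖vh‖ = 1) :
    let Pdag : Matrix (Fin K) (Fin T) ℝ := (Pᵀ * P)⁻¹ * Pᵀ
    let st : EuclideanSpace ℝ (Fin T) := Matrix.toEuclideanLin P v
    let sh : EuclideanSpace ℝ (Fin T) := Matrix.toEuclideanLin P vh
    ⟪vh, v⟫ ^ 2 ≤ gMat Pdag + (⟪sh, st⟫ / (‖sh‖ * ‖st‖)) ^ 2 := by
  intro Pdag st sh
  set L : EuclideanSpace ℝ (Fin T) →ₗ[ℝ] EuclideanSpace ℝ (Fin K) :=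
    Matrix.toEuclideanLin Pdag with hLdef
  have hdet : IsUnit (Pᵀ * P).det := (Matrix.isUnit_iff_isUnit_det _).1 hfull
  have hPdagP : Pdag * P = 1 := by
    show (Pᵀ * P)⁻¹ * Pᵀ * P = 1
    rw [Matrix.mul_assoc]
    exact Matrix.nonsing_inv_mul _ hdet
  have hLP : ∀ u : EuclideanSpace ℝ (Fin K), L (Matrix.toEuclideanLin P u) = u := by
    intro u
    rw [hLdef]
    simp only [Matrix.toEuclideanLin_apply]
    simp only [Equiv.apply_symm_apply, Matrix.mulVec_mulVec, hPdagP, Matrix.one_mulVec]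
  have hLst : L st = v := hLP v
  have hLsh : L sh = vh := hLP vh
  set ε : ℝ := matNorm (Pdagᵀ * Pdag - 1) with hεdef
  have hε : 0 ≤ ε := norm_nonneg _
  -- the bilinear error bound
  have hE : ∀ u w : EuclideanSpace ℝ (Fin T),
      ⟪Matrix.toEuclideanLin (Pdagᵀ * Pdag - 1) u, w⟫ = ⟪L u, L w⟫ - ⟪u, w⟫ := by
    intro u w
    have h1 : (Pdagᵀ : Matrix (Fin T) (Fin K) ℝ) = Pdagᴴ :=
      (Matrix.conjTranspose_eq_transpose_of_trivial _).symm
    rw [map_sub, LinearMap.sub_apply, inner_sub_left]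
    have h2 : Matrix.toEuclideanLin (Pdagᵀ * Pdag) u
        = Matrix.toEuclideanLin Pdagᴴ (L u) := by
      rw [h1, hLdef]
      simp only [Matrix.toEuclideanLin_apply, Matrix.mulVec_mulVec]
    rw [h2, Matrix.toEuclideanLin_conjTranspose_eq_adjoint, LinearMap.adjoint_inner_left]
    have h3 : Matrix.toEuclideanLin (1 : Matrix (Fin T) (Fin T) ℝ) u = u := by
      simp only [Matrix.toEuclideanLin_apply, Matrix.one_mulVec]
    rw [h3]
  have hLb : ∀ u w : EuclideanSpace ℝ (Fin T),
      |⟪L u, L w⟫ - ⟪u, w⟫| ≤ ε * (‖u‖ * ‖w‖) := by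
    intro u w
    rw [← hE u w]
    have h4 : ‖Matrix.toEuclideanLin (Pdagᵀ * Pdag - 1) u‖ ≤ ε * ‖u‖ := by
      have h5 := (LinearMap.toContinuousLinearMap
        (Matrix.toEuclideanLin (Pdagᵀ * Pdag - 1))).le_opNorm u
      rw [hεdef]
      simpa only [matNorm, LinearMap.coe_toContinuousLinearMap'] using h5
    calc |⟪Matrix.toEuclideanLin (Pdagᵀ * Pdag - 1) u, w⟫|
        ≤ ‖Matrix.toEuclideanLin (Pdagᵀ * Pdag - 1) u‖ * ‖w‖ := abs_real_inner_le_norm _ _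
      _ ≤ (ε * ‖u‖) * ‖w‖ := mul_le_mul_of_nonneg_right h4 (norm_nonneg w)
      _ = ε * (‖u‖ * ‖w‖) := by ring
  -- nonvanishing
  have hstne : st ≠ 0 := by
    intro h
    have : v = 0 := by rw [← hLst, h, map_zero]
    rw [this, norm_zero] at hv; exact one_ne_zero hv.symm
  have hshne : sh ≠ 0 := by
    intro h
    have : vh = 0 := by rw [← hLsh, h, map_zero]
    rw [this, norm_zero] at hvh; exact one_ne_zero hvh.symm
  have hstpos : 0 < ‖st‖ := norm_pos_iff.2 hstne
  have hshpos : 0 < ‖sh‖ := norm_pos_iff.2 hshne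
  set x : EuclideanSpace ℝ (Fin T) := ‖sh‖⁻¹ • sh with hxdef
  set y : EuclideanSpace ℝ (Fin T) := ‖st‖⁻¹ • st with hydef
  have hx : ‖x‖ = 1 := by
    rw [hxdef, norm_smul, Real.norm_eq_abs, abs_inv, abs_of_pos hshpos]
    field_simp
  have hy : ‖y‖ = 1 := by
    rw [hydef, norm_smul, Real.norm_eq_abs, abs_inv, abs_of_pos hstpos]
    field_simp
  have KEY := keyIneq L ε hε hLb x y hx hy
  have e1 : ⟪L x, L y⟫ = ‖sh‖⁻¹ * (‖st‖⁻¹ * ⟪vh, v⟫) := by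
    rw [hxdef, hydef, map_smul, map_smul, hLsh, hLst, real_inner_smul_left,
      real_inner_smul_right]
  have e2 : ⟪x, y⟫ = ‖sh‖⁻¹ * (‖st‖⁻¹ * ⟪sh, st⟫) := by
    rw [hxdef, hydef, real_inner_smul_left, real_inner_smul_right]
  have e3 : ‖L x‖ = ‖sh‖⁻¹ := by
    rw [hxdef, map_smul, norm_smul, Real.norm_eq_abs, abs_inv, abs_of_pos hshpos, hLsh, hvh,
      mul_one]
  have e4 : ‖L y‖ = ‖st‖⁻¹ := by
    rw [hydef, map_smul, norm_smul, Real.norm_eq_abs, abs_inv, abs_of_pos hstpos, hLst, hv,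
      mul_one]
  rw [e1, e2, e3, e4] at KEY
  have hgoal : gMat Pdag = ε ^ 2 + 2 * ε := rfl
  rw [hgoal]
  have hKEY2 := mul_le_mul_of_nonneg_right KEY (sq_nonneg (‖sh‖ * ‖st‖))
  have hid1 : (‖sh‖⁻¹ * (‖st‖⁻¹ * ⟪vh, v⟫))^2 * (‖sh‖ * ‖st‖)^2 = ⟪vh, v⟫^2 := by
    field_simp
  have hid2 : ((‖sh‖⁻¹ * (‖st‖⁻¹ * ⟪sh, st⟫))^2 + 2*ε + ε^2) * ((‖sh‖⁻¹)^2 * (‖st‖⁻¹)^2)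
      * (‖sh‖ * ‖st‖)^2 = (⟪sh, st⟫ / (‖sh‖ * ‖st‖))^2 + 2*ε + ε^2 := by
    rw [div_pow]
    field_simp
  rw [hid1, hid2] at hKEY2
  linarith [hKEY2]
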